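/- Let {a_s + n_s ℤ}_{s=1}^k be a disjoint cover of ℤ. For each t ∈ {1,…,k} and each r ∈ {0,1,…,n_t − 1} there exists a subset I ⊆ {1,…,k} \ {t} with ∑_{s∈I} 1/n_s = r/n_t. -/

import Mathlib

open Polynomial Finset

theorem stmt_3 (k : ℕ) (a : Fin k → ℤ) (n : Fin k → ℕ) (hn : ∀ s, 0 < n s)
    (hcover : ∀ x : ℤ, ∃! s : Fin k, (n s : ℤ) ∣ x - a s)
    (t : Fin k) (r : ℕ) (hr : r < n t) :
    ∃ I : Finset (Fin k), t ∉ I ∧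
      ∑ s ∈ I, (1 : ℚ) / n s = (r : ℚ) / n t := by
  classical
  set L : ℕ := Finset.univ.lcm n with hLdef
  have hdvd : ∀ s, n s ∣ L := fun s => Finset.dvd_lcm (mem_univ s)
  have hL : 0 < L := by
    rcases Nat.eq_zero_or_pos L with h | h
    · exfalso
      rw [hLdef] at h
      rw [Finset.lcm_eq_zero_iff] at h
      obtain ⟨s, -, hs⟩ := h
      exact (hn s).ne' hs
    · exact h
  set m : Fin k → ℕ := fun s => L / n s with hmdef
  have hnm : ∀ s, n s * m s = L := fun s => Nat.mul_div_cancel' (hdvd s)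
  have hm : ∀ s, 0 < m s := fun s =>
    Nat.div_pos (Nat.le_of_dvd hL (hdvd s)) (hn s)
  -- counting : ∑ m s ≤ L
  have hcount : ∑ s, m s ≤ L := by
    have key : ∀ s, m s ≤ ((Finset.range L).filter
        (fun x : ℕ => (n s : ℤ) ∣ (x : ℤ) - a s)).card := by
      intro s
      have := Finset.card_le_card_of_injOn
        (f := fun i => ((a s) % (n s)).toNat + i * n s)
        (s := Finset.range (m s))
        (t := (Finset.range L).filter (fun x : ℕ => (n s : ℤ) ∣ (x : ℤ) - a s))
        ?_ ?_
      · simpa using this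
      · intro i hi
        have hi' : i < m s := Finset.mem_range.mp hi
        have hb0 : 0 ≤ (a s) % (n s) := Int.emod_nonneg _ (by exact_mod_cast (hn s).ne')
        have hbn : (a s) % (n s) < n s := Int.emod_lt_of_pos _ (by exact_mod_cast hn s)
        refine Finset.mem_filter.mpr ⟨Finset.mem_range.mpr ?_, ?_⟩
        · have h1 : ((a s) % (n s)).toNat < n s := by omega
          have h2 : (i + 1) * n s ≤ m s * n s := Nat.mul_le_mul_right _ (by omega)
          have h3 : m s * n s = L := by rw [mul_comm]; exact hnm s
          nlinarith [h1, h2]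
        · refine ⟨(i : ℤ) - (a s) / (n s), ?_⟩
          have : (((a s) % (n s)).toNat : ℤ) = (a s) % (n s) := Int.toNat_of_nonneg hb0
          push_cast
          rw [this, Int.emod_def]
          ring
      · intro i hi j hj hij
        simp only at hij
        have := Nat.add_left_cancel hij
        exact Nat.eq_of_mul_eq_mul_right (hn s) this
    have h2 : ∑ s, ((Finset.range L).filter
        (fun x : ℕ => (n s : ℤ) ∣ (x : ℤ) - a s)).card ≤ L := by
      have hone : ∀ x ∈ Finset.range L,
          (Finset.univ.filter (fun s : Fin k => (n s : ℤ) ∣ (x : ℤ) - a s)).card ≤ 1 := by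
        intro x _
        refine Finset.card_le_one.mpr ?_
        intro s hs s' hs'
        simp only [Finset.mem_filter, Finset.mem_univ, true_and] at hs hs'
        exact (hcover x).unique hs hs'
      calc ∑ s, ((Finset.range L).filter (fun x : ℕ => (n s : ℤ) ∣ (x : ℤ) - a s)).card
          = ∑ x ∈ Finset.range L,
            (Finset.univ.filter (fun s : Fin k => (n s : ℤ) ∣ (x : ℤ) - a s)).card := by
            simp_rw [Finset.card_filter]
            rw [Finset.sum_comm]
        _ ≤ ∑ x ∈ Finset.range L, 1 := Finset.sum_le_sum hone
        _ = L := by simp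
    calc ∑ s, m s ≤ ∑ s, ((Finset.range L).filter
          (fun x : ℕ => (n s : ℤ) ∣ (x : ℤ) - a s)).card := Finset.sum_le_sum fun s _ => key s
      _ ≤ L := h2
  -- complex setup
  set ζ : ℂ := Complex.exp (2 * Real.pi * Complex.I / L) with hζdef
  have hζ : IsPrimitiveRoot ζ L := Complex.isPrimitiveRoot_exp L hL.ne'
  have hζ0 : ζ ≠ 0 := hζ.ne_zero hL.ne'
  set z : Fin k → ℂ := fun s => ζ ^ (-(a s) * (m s : ℤ)) with hzdef
  have hz0 : ∀ s, z s ≠ 0 := fun s => zpow_ne_zero _ hζ0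
  have hvan : ∀ (j : ℕ) (s : Fin k), (n s : ℤ) ∣ (j : ℤ) - a s →
      z s * (ζ ^ j) ^ m s = 1 := by
    intro j s hdv
    obtain ⟨c, hc⟩ := hdv
    have e1 : (ζ ^ j) ^ m s = ζ ^ ((j * m s : ℕ) : ℤ) := by
      rw [← pow_mul, zpow_natCast]
    rw [e1, hzdef]
    rw [← zpow_add₀ hζ0]
    rw [hζ.zpow_eq_one_iff_dvd]
    refine ⟨c, ?_⟩
    have hL' : ((n s : ℤ)) * m s = L := by exact_mod_cast congrArg (Nat.cast : ℕ → ℤ) (hnm s)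
    push_cast
    linear_combination (m s : ℤ) * hc + c * hL'
  set G : ℂ[X] := ∏ s, (1 - C (z s) * X ^ m s) with hGdef
  have hGdeg : G.natDegree ≤ L := by
    refine le_trans (Polynomial.natDegree_prod_le _ _) (le_trans (Finset.sum_le_sum ?_) hcount)
    intro s _
    refine le_trans (Polynomial.natDegree_sub_le _ _) (max_le (by simp) ?_)
    exact le_trans (Polynomial.natDegree_C_mul_le _ _) (by simp)
  have hGeval : ∀ j : ℕ, G.eval (ζ ^ j) = 0 := by
    intro j
    obtain ⟨s, hs, -⟩ := hcover (j : ℤ)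
    rw [hGdef, Polynomial.eval_prod]
    refine Finset.prod_eq_zero (mem_univ s) ?_
    simp [hvan j s hs]
  set lc : ℂ := G.coeff L with hlcdef
  have hD0 : G - C lc * (X ^ L - 1) = 0 := by
    set D : ℂ[X] := G - C lc * (X ^ L - 1) with hDdef
    by_cases hD : D = 0
    · exact hD
    refine Polynomial.eq_zero_of_natDegree_lt_card_of_eval_eq_zero D
      (f := fun j : Fin L => ζ ^ (j : ℕ)) ?_ ?_ ?_
    · intro i j hij
      exact Fin.ext (hζ.pow_inj i.isLt j.isLt hij)
    · intro i
      have h1 : (ζ ^ (i : ℕ)) ^ L = 1 := by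
        rw [← pow_mul, mul_comm, pow_mul, hζ.pow_eq_one, one_pow]
      simp [hDdef, hGeval, h1]
    · rw [Fintype.card_fin]
      rw [Polynomial.natDegree_lt_iff_degree_lt hD]
      rw [Polynomial.degree_lt_iff_coeff_zero]
      intro d hd
      have hd' : L ≤ d := by exact_mod_cast hd
      rcases eq_or_lt_of_le hd' with h | h
      · subst h
        simp [hDdef, Polynomial.coeff_sub, Polynomial.coeff_C_mul, Polynomial.coeff_X_pow,
          Polynomial.coeff_one, hL.ne', hlcdef]
      · have hG0 : G.coeff d = 0 :=
          Polynomial.coeff_eq_zero_of_natDegree_lt (lt_of_le_of_lt hGdeg h)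
        simp [hDdef, hG0, Polynomial.coeff_sub, Polynomial.coeff_C_mul, Polynomial.coeff_X_pow,
          Polynomial.coeff_one, h.ne', (by omega : d ≠ 0)]
        intro h0
        exact absurd h0 (by omega)
  have hG : G = C lc * (X ^ L - 1) := by
    have := sub_eq_zero.mp hD0
    exact this
  -- geometric series
  set x : ℂ[X] := C (z t) * X ^ m t with hxdef
  have hznt : z t ^ n t = 1 := by
    rw [hzdef]
    rw [← zpow_natCast (ζ ^ (-(a t) * (m t : ℤ))) (n t), ← zpow_mul]
    rw [hζ.zpow_eq_one_iff_dvd]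
    refine ⟨-(a t), ?_⟩
    have hL' : ((n t : ℤ)) * m t = L := by exact_mod_cast congrArg (Nat.cast : ℕ → ℤ) (hnm t)
    linear_combination (-(a t)) * hL'
  have hxn : x ^ n t = X ^ L := by
    rw [hxdef, mul_pow, ← C_pow, hznt, ← pow_mul, map_one, one_mul]
    congr 1
    rw [mul_comm]
    exact hnm t
  set H : ℂ[X] := ∏ s ∈ Finset.univ.erase t, (1 - C (z s) * X ^ m s) with hHdef
  have hGH : G = (1 - x) * H := by
    rw [hGdef, hHdef, hxdef, ← Finset.mul_prod_erase Finset.univ _ (mem_univ t)]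
  have hne : (1 - x : ℂ[X]) ≠ 0 := by
    intro h
    have := congrArg (Polynomial.eval 0) h
    simp [hxdef, zero_pow (hm t).ne'] at this
  have hH : H = C (-lc) * ∑ i ∈ Finset.range (n t), x ^ i := by
    apply mul_left_cancel₀ hne
    rw [← hGH, hG, ← hxn, ← geom_sum_mul, map_neg]
    ring
  -- lc ≠ 0 : else H = 0, but H.eval 0 = 1
  have hlc : lc ≠ 0 := by
    intro h
    have hH0 : H = 0 := by rw [hH, h]; simp
    have := congrArg (Polynomial.eval 0) hH0
    rw [hHdef] at this
    simp [Polynomial.eval_prod, zero_pow, fun s : Fin k => (hm s).ne'] at this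
  -- coefficient computation, RHS
  have hcoeffR : H.coeff (r * m t) = -lc * z t ^ r := by
    rw [hH, Polynomial.coeff_C_mul, Polynomial.finset_sum_coeff]
    congr 1
    have hxi : ∀ i : ℕ, (x ^ i) = C (z t ^ i) * X ^ (m t * i) := by
      intro i
      rw [hxdef, mul_pow, ← C_pow, ← pow_mul]
    rw [Finset.sum_eq_single r]
    · rw [hxi, Polynomial.coeff_C_mul, Polynomial.coeff_X_pow,
        if_pos (mul_comm r (m t)), mul_one]
    · intro i hi hir
      rw [hxi, Polynomial.coeff_C_mul, Polynomial.coeff_X_pow, if_neg, mul_zero]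
      intro hc
      apply hir
      have hmm : m t * i = m t * r := by rw [← hc, mul_comm]
      exact Nat.eq_of_mul_eq_mul_left (hm t) hmm
    · intro h
      exact absurd (Finset.mem_range.mpr hr) h
  -- coefficient computation, LHS: expand product
  have hexp : H = ∑ I ∈ (Finset.univ.erase t).powerset,
      C (∏ i ∈ I, (-z i)) * X ^ (∑ i ∈ I, m i) := by
    rw [hHdef]
    have : ∀ s : Fin k, (1 - C (z s) * X ^ m s : ℂ[X]) = C (-z s) * X ^ m s + 1 := by
      intro s; rw [map_neg]; ring
    simp_rw [this]
    rw [Finset.prod_add]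
    refine Finset.sum_congr rfl ?_
    intro I hI
    rw [Finset.prod_const_one, mul_one, Finset.prod_mul_distrib, ← map_prod,
      Finset.prod_pow_eq_pow_sum]
  have hcoeffL : H.coeff (r * m t) = ∑ I ∈ (Finset.univ.erase t).powerset,
      (∏ i ∈ I, (-z i)) * (if r * m t = ∑ i ∈ I, m i then 1 else 0) := by
    rw [hexp, Polynomial.finset_sum_coeff]
    refine Finset.sum_congr rfl ?_
    intro I hI
    rw [Polynomial.coeff_C_mul, Polynomial.coeff_X_pow]
  -- extract subset
  have hnz : H.coeff (r * m t) ≠ 0 := by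
    rw [hcoeffR]
    exact mul_ne_zero (neg_ne_zero.mpr hlc) (pow_ne_zero _ (hz0 t))
  rw [hcoeffL] at hnz
  obtain ⟨I, hI, hIne⟩ := Finset.exists_ne_zero_of_sum_ne_zero hnz
  have hIsum : r * m t = ∑ i ∈ I, m i := by
    by_contra h
    rw [if_neg h, mul_zero] at hIne
    exact hIne rfl
  refine ⟨I, ?_, ?_⟩
  · intro ht
    exact (Finset.mem_erase.mp ((Finset.mem_powerset.mp hI) ht)).1 rfl
  · have hrat : ∀ s : Fin k, (1 : ℚ) / n s = (m s : ℚ) / L := by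
      intro s
      have h1 : ((n s : ℚ)) * (m s : ℚ) = (L : ℚ) := by exact_mod_cast hnm s
      have hn0 : (n s : ℚ) ≠ 0 := by exact_mod_cast (hn s).ne'
      have hm0 : (m s : ℚ) ≠ 0 := by exact_mod_cast (hm s).ne'
      rw [← h1]
      field_simp
    calc ∑ s ∈ I, (1 : ℚ) / n s = ∑ s ∈ I, (m s : ℚ) / L := by
          exact Finset.sum_congr rfl fun s _ => hrat s
      _ = ((∑ i ∈ I, m i : ℕ) : ℚ) / L := by rw [Nat.cast_sum, Finset.sum_div]
      _ = ((r * m t : ℕ) : ℚ) / L := by rw [← hIsum]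
      _ = (r : ℚ) / n t := by
          have h1 : ((n t : ℚ)) * (m t : ℚ) = (L : ℚ) := by exact_mod_cast hnm t
          have hn0 : (n t : ℚ) ≠ 0 := by exact_mod_cast (hn t).ne'
          have hm0 : (m t : ℚ) ≠ 0 := by exact_mod_cast (hm t).ne'
          rw [← h1]
          push_cast
          field_simp
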